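/- Let ℓ, n, k ∈ ℕ with k ≤ n ≤ 2^ℓ, R = k/n, 0 ≤ s ≤ n, and k′ ≥ 0. Let c be a uniform codeword of the Reed–Solomon code over 𝔽_{2^ℓ} with dimension k and block length n, let ρ be the random-subset noise on s coordinates, and let D be any distribution on 𝔽_{2^ℓ}ⁿ with H_∞(D) ≥ k′, where c, ρ and D are mutually independent. Then the statistical distance between c + ρ + D (coordinatewise addition in 𝔽_{2^ℓ}) and the uniform distribution on 𝔽_{2^ℓ}ⁿ is at most 2^{(nℓ − k′)/2 − 1}·(1 − R)^s. -/

import Mathlib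

open Finset

/-- Statistical distance between two (mass functions of) distributions on a finite set. -/
noncomputable def SD {Ω : Type*} [Fintype Ω] (p q : Ω → ℝ) : ℝ :=
  (∑ ω, |p ω - q ω|) / 2

/-- Min-entropy of a distribution on a finite set: `-log₂ (max_ω p ω)`. -/
noncomputable def minEntropy {Ω : Type*} [Fintype Ω] (p : Ω → ℝ) : ℝ :=
  - Real.logb 2 (⨆ ω, p ω)

/-- Reed–Solomon encoding with dimension `k`, block length `n` and (distinct)
evaluation points `a : Fin n → F`:  `m ↦ (f_m(a₁), …, f_m(a_n))`. -/
def rsEnc {F : Type*} [Field F] (k n : ℕ) (a : Fin n → F) (m : Fin k → F) : Fin n → F :=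
  fun i => ∑ j : Fin k, m j * a i ^ (j : ℕ)

/-- Mass function of a uniform Reed–Solomon codeword (encoding of a uniform message). -/
noncomputable def encDist {F : Type*} [Field F] [Fintype F] [DecidableEq F]
    (k n : ℕ) (a : Fin n → F) : (Fin n → F) → ℝ :=
  fun w => ∑ m : Fin k → F,
    (1 / (Fintype.card F : ℝ) ^ k) * (if rsEnc k n a m = w then 1 else 0)

/-- Mass function of the random-subset noise on `s` coordinates: a uniform size-`s`
subset `S ⊆ {1,…,n}` gets independent uniform field elements, other coordinates are 0. -/
noncomputable def noiseDist {F : Type*} [Field F] [Fintype F] [DecidableEq F]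
    (n s : ℕ) : (Fin n → F) → ℝ :=
  fun w => ∑ S ∈ Finset.powersetCard s (Finset.univ : Finset (Fin n)), ∑ e : Fin n → F,
    (1 / (n.choose s : ℝ)) * (1 / (Fintype.card F : ℝ) ^ n) *
      (if (fun i => if i ∈ S then e i else 0) = w then 1 else 0)

namespace MNC


/-- A `±1`-valued nontrivial additive character. -/
structure GoodChar {F : Type*} [Field F] (ψ : F → ℝ) : Prop where
  add : ∀ x y : F, ψ (x + y) = ψ x * ψ y
  vals : ∀ x : F, ψ x = 1 ∨ ψ x = -1
  nt : ∃ x : F, ψ x = -1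

namespace GoodChar

variable {F : Type*} [Field F] {ψ : F → ℝ}

lemma zero (h : GoodChar ψ) : ψ 0 = 1 := by
  have h0 := h.add 0 0
  simp only [add_zero] at h0
  rcases h.vals 0 with h1 | h1 <;> rw [h1] at h0 ⊢ <;> nlinarith

lemma map_sum (h : GoodChar ψ) {ι : Type*} (s : Finset ι) (f : ι → F) :
    ψ (∑ i ∈ s, f i) = ∏ i ∈ s, ψ (f i) := by
  classical
  induction s using Finset.induction with
  | empty => simpa using h.zero
  | insert _ _ hx ih =>
      rw [Finset.sum_insert hx, Finset.prod_insert hx, h.add, ih]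

variable [Fintype F] [DecidableEq F]

lemma sum_mul_right (h : GoodChar ψ) {c : F} (hc : c ≠ 0) :
    ∑ x : F, ψ (x * c) = 0 := by
  obtain ⟨x₀, hx₀⟩ := h.nt
  have key : ∑ x : F, ψ ((x + x₀ * c⁻¹) * c) = ∑ x : F, ψ (x * c) :=
    Fintype.sum_equiv (Equiv.addRight (x₀ * c⁻¹)) _ _ (fun x => rfl)
  have h2 : ∀ x : F, ψ ((x + x₀ * c⁻¹) * c) = ψ (x * c) * (-1) := by
    intro x
    rw [add_mul, h.add, mul_assoc, inv_mul_cancel₀ hc, mul_one, hx₀]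
  simp only [h2] at key
  rw [← Finset.sum_mul] at key
  nlinarith [key]

lemma sum_mul_right' (h : GoodChar ψ) (c : F) :
    ∑ x : F, ψ (x * c) = if c = 0 then (Fintype.card F : ℝ) else 0 := by
  by_cases hc : c = 0
  · simp [hc, h.zero]
  · simp [hc, h.sum_mul_right]

lemma eq_zero_of_forall (h : GoodChar ψ) {z : F} (hz : ∀ l : F, ψ (l * z) = 1) : z = 0 := by
  by_contra hz0
  obtain ⟨x₀, hx₀⟩ := h.nt
  have := hz (x₀ * z⁻¹)
  rw [mul_assoc, inv_mul_cancel₀ hz0, mul_one, hx₀] at this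
  norm_num at this

lemma ne_zero (h : GoodChar ψ) (x : F) : ψ x ≠ 0 := by
  rcases h.vals x with h1 | h1 <;> rw [h1] <;> norm_num

end GoodChar

section Fourier

variable {F : Type*} [Field F] [Fintype F] [DecidableEq F] {n : ℕ} {ψ : F → ℝ}

/-- The additive character of `Fin n → F` indexed by `y`. -/
noncomputable def chr (ψ : F → ℝ) {n : ℕ} (y w : Fin n → F) : ℝ := ψ (∑ i, y i * w i)

lemma chr_comm (y w : Fin n → F) : chr ψ y w = chr ψ w y := by
  unfold chr; congr 1; exact Finset.sum_congr rfl fun i _ => mul_comm _ _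

lemma chr_prod (h : GoodChar ψ) (y w : Fin n → F) :
    chr ψ y w = ∏ i, ψ (y i * w i) := h.map_sum _ _

lemma chr_add_right (h : GoodChar ψ) (y v w : Fin n → F) :
    chr ψ y (v + w) = chr ψ y v * chr ψ y w := by
  unfold chr
  rw [← h.add]
  congr 1
  rw [← Finset.sum_add_distrib]
  exact Finset.sum_congr rfl fun i _ => by simp [mul_add]

lemma chr_zero_left (h : GoodChar ψ) (w : Fin n → F) : chr ψ 0 w = 1 := by
  unfold chr; simp [h.zero]

lemma sum_chr (h : GoodChar ψ) (y : Fin n → F) :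
    ∑ w : Fin n → F, chr ψ y w = if y = 0 then ((Fintype.card F : ℝ)) ^ n else 0 := by
  have : ∑ w : Fin n → F, chr ψ y w = ∏ i, ∑ t : F, ψ (y i * t) := by
    simp_rw [chr_prod h]
    exact (Fintype.prod_sum fun i t => ψ (y i * t)).symm
  rw [this]
  have hfac : ∀ i, ∑ t : F, ψ (y i * t) = if y i = 0 then (Fintype.card F : ℝ) else 0 := by
    intro i
    rw [← h.sum_mul_right' (y i)]
    exact Finset.sum_congr rfl fun t _ => by rw [mul_comm]
  by_cases hy : y = 0
  · subst hy; simp [hfac, h.zero]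
  · rw [if_neg hy]
    obtain ⟨i₀, hi₀⟩ : ∃ i, y i ≠ 0 := Function.ne_iff.mp hy
    exact Finset.prod_eq_zero (Finset.mem_univ i₀) (by rw [hfac, if_neg hi₀])

/-- Fourier transform of `p` at `y`. -/
noncomputable def ft (ψ : F → ℝ) {n : ℕ} (p : (Fin n → F) → ℝ) (y : Fin n → F) : ℝ :=
  ∑ w, p w * chr ψ y w

lemma ft_conv (h : GoodChar ψ) (p q : (Fin n → F) → ℝ) (y : Fin n → F) :
    ft ψ (fun w => ∑ v, p v * q (w - v)) y = ft ψ p y * ft ψ q y := by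
  unfold ft
  calc ∑ w, (∑ v, p v * q (w - v)) * chr ψ y w
      = ∑ w, ∑ v, p v * q (w - v) * chr ψ y w := by simp [Finset.sum_mul]
    _ = ∑ v, ∑ w, p v * q (w - v) * chr ψ y w := Finset.sum_comm
    _ = ∑ v, ∑ u, p v * q u * chr ψ y (u + v) := by
        refine Finset.sum_congr rfl fun v _ => ?_
        exact (Fintype.sum_equiv (Equiv.addRight v) _ _ (fun u => by simp)).symm
    _ = ∑ v, ∑ u, (p v * chr ψ y v) * (q u * chr ψ y u) := by
        refine Finset.sum_congr rfl fun v _ => Finset.sum_congr rfl fun u _ => ?_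
        rw [chr_add_right h]; ring
    _ = (∑ v, p v * chr ψ y v) * (∑ u, q u * chr ψ y u) := by
        rw [Finset.sum_mul_sum]

lemma parseval (h : GoodChar ψ) (hch : ∀ v : Fin n → F, v + v = 0)
    (p : (Fin n → F) → ℝ) :
    ∑ y, (ft ψ p y) ^ 2 = ((Fintype.card F : ℝ)) ^ n * ∑ w, (p w) ^ 2 := by
  have hiff : ∀ w w' : Fin n → F, w + w' = 0 ↔ w' = w := by
    intro w w'
    constructor
    · intro H
      have h1 : w' = -w := eq_neg_of_add_eq_zero_right H
      have h2 : -w = w := neg_eq_of_add_eq_zero_right (hch w)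
      rw [h1, h2]
    · rintro rfl; exact hch _
  unfold ft
  calc ∑ y, (∑ w, p w * chr ψ y w) ^ 2
      = ∑ y, ∑ w, ∑ w', (p w * chr ψ y w) * (p w' * chr ψ y w') := by
        simp_rw [sq, Finset.sum_mul_sum]
    _ = ∑ w, ∑ w', ∑ y, (p w * chr ψ y w) * (p w' * chr ψ y w') := by
        rw [Finset.sum_comm]
        exact Finset.sum_congr rfl fun w _ => Finset.sum_comm
    _ = ∑ w, ∑ w', p w * p w' * ∑ y, chr ψ y (w + w') := by
        refine Finset.sum_congr rfl fun w _ => Finset.sum_congr rfl fun w' _ => ?_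
        rw [Finset.mul_sum]
        refine Finset.sum_congr rfl fun y _ => ?_
        rw [chr_add_right h]; ring
    _ = ∑ w, ∑ w', p w * p w' * (if w' = w then ((Fintype.card F : ℝ)) ^ n else 0) := by
        refine Finset.sum_congr rfl fun w _ => Finset.sum_congr rfl fun w' _ => ?_
        have e1 : ∑ y : Fin n → F, chr ψ y (w + w') =
            (if w' = w then ((Fintype.card F : ℝ)) ^ n else 0) := by
          rw [Finset.sum_congr rfl fun y (_ : y ∈ Finset.univ) => chr_comm y (w + w'),
            sum_chr h]
          simp [hiff w w']
        rw [e1]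
    _ = ∑ w, p w * p w * ((Fintype.card F : ℝ)) ^ n := by
        refine Finset.sum_congr rfl fun w _ => ?_
        simp_rw [mul_ite, mul_zero]
        rw [Finset.sum_ite_eq' Finset.univ w]
        simp
    _ = ((Fintype.card F : ℝ)) ^ n * ∑ w, (p w) ^ 2 := by
        rw [Finset.mul_sum]
        exact Finset.sum_congr rfl fun w _ => by ring

lemma ft_zero_eq_sum (h : GoodChar ψ) (p : (Fin n → F) → ℝ) :
    ft ψ p 0 = ∑ w, p w := by
  unfold ft
  simp [chr_zero_left h]

end Fourier


section Specific

variable {F : Type*} [Field F] [Fintype F] [DecidableEq F] {n k : ℕ} {ψ : F → ℝ}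

lemma card_pos_real : (0:ℝ) < (Fintype.card F : ℝ) := by
  exact_mod_cast Fintype.card_pos

lemma ft_enc (h : GoodChar ψ) (a : Fin n → F) (y : Fin n → F) :
    ft ψ (encDist k n a) y =
      if (∀ j : Fin k, ∑ i, y i * a i ^ (j : ℕ) = 0) then 1 else 0 := by
  have hq : (0:ℝ) < (Fintype.card F : ℝ) := card_pos_real
  have key : ft ψ (encDist k n a) y
      = ∑ m : Fin k → F, (1 / (Fintype.card F : ℝ) ^ k) * chr ψ y (rsEnc k n a m) := by
    unfold ft encDist
    simp only [Finset.sum_mul]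
    rw [Finset.sum_comm]
    refine Finset.sum_congr rfl fun m _ => ?_
    simp only [ite_mul, mul_ite, mul_one, mul_zero, zero_mul, one_mul, mul_assoc]
    rw [Finset.sum_ite_eq]
    simp
  have swap : ∀ m : Fin k → F,
      ∑ i, y i * rsEnc k n a m i = ∑ j : Fin k, m j * (∑ i, y i * a i ^ (j:ℕ)) := by
    intro m
    unfold rsEnc
    simp_rw [Finset.mul_sum]
    rw [Finset.sum_comm]
    exact Finset.sum_congr rfl fun j _ => Finset.sum_congr rfl fun i _ => by ring
  have key2 : ∑ m : Fin k → F, chr ψ y (rsEnc k n a m)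
      = ∏ j : Fin k, ∑ t : F, ψ (t * (∑ i, y i * a i ^ (j:ℕ))) := by
    unfold chr
    simp_rw [swap, h.map_sum]
    exact (Fintype.prod_sum (fun (j : Fin k) (t : F) => ψ (t * (∑ i, y i * a i ^ (j:ℕ))))).symm
  rw [← Finset.mul_sum] at key
  rw [key, key2]
  by_cases hall : ∀ j : Fin k, ∑ i, y i * a i ^ (j:ℕ) = 0
  · rw [if_pos hall]
    have hfac : ∀ j : Fin k, (∑ t : F, ψ (t * (∑ i, y i * a i ^ (j:ℕ)))) = (Fintype.card F : ℝ) := by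
      intro j; rw [hall j]; simp [h.zero]
    rw [Finset.prod_congr rfl fun j _ => hfac j, Finset.prod_const]
    simp only [Finset.card_univ, Fintype.card_fin]
    field_simp
  · rw [if_neg hall]
    push_neg at hall
    obtain ⟨j₀, hj₀⟩ := hall
    rw [Finset.prod_eq_zero (Finset.mem_univ j₀) (h.sum_mul_right hj₀), mul_zero]
  
lemma ft_noise (h : GoodChar ψ) (s : ℕ) (y : Fin n → F) :
    ft ψ (noiseDist n s) y =
      (((Finset.univ.filter fun i => y i = 0).card.choose s : ℝ)) / (n.choose s : ℝ) := by
  have hq : (0:ℝ) < (Fintype.card F : ℝ) := card_pos_real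
  have key : ft ψ (noiseDist n s) y
      = ∑ S ∈ Finset.powersetCard s (Finset.univ : Finset (Fin n)),
          (1 / (n.choose s : ℝ)) *
            ((1 / (Fintype.card F : ℝ) ^ n) *
              ∑ e : Fin n → F, chr ψ y (fun i => if i ∈ S then e i else 0)) := by
    unfold ft noiseDist
    simp only [Finset.sum_mul]
    rw [Finset.sum_comm]
    refine Finset.sum_congr rfl fun S _ => ?_
    rw [Finset.sum_comm]
    simp only [Finset.mul_sum]
    refine Finset.sum_congr rfl fun e _ => ?_
    simp only [ite_mul, mul_ite, mul_one, mul_zero, zero_mul, one_mul, mul_assoc]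
    rw [Finset.sum_ite_eq]
    simp
  have inner : ∀ S ∈ Finset.powersetCard s (Finset.univ : Finset (Fin n)),
      (1 / (Fintype.card F : ℝ) ^ n) *
          ∑ e : Fin n → F, chr ψ y (fun i => if i ∈ S then e i else 0)
        = (if ∀ i ∈ S, y i = 0 then (1:ℝ) else 0) := by
    intro S _
    have hmask : ∀ e : Fin n → F, chr ψ y (fun i => if i ∈ S then e i else 0)
        = ∏ i, (if i ∈ S then ψ (y i * e i) else 1) := by
      intro e
      rw [chr_prod h]
      refine Finset.prod_congr rfl fun i _ => ?_
      by_cases hi : i ∈ S <;> simp [hi, h.zero]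
    simp_rw [hmask]
    rw [← Fintype.prod_sum (fun (i : Fin n) (t : F) => if i ∈ S then ψ (y i * t) else 1)]
    by_cases hS : ∀ i ∈ S, y i = 0
    · rw [if_pos hS]
      have hfac : ∀ i : Fin n, (∑ t : F, if i ∈ S then ψ (y i * t) else 1)
          = (Fintype.card F : ℝ) := by
        intro i
        by_cases hi : i ∈ S
        · simp [hi, hS i hi, h.zero]
        · simp [hi]
      rw [Finset.prod_congr rfl fun i _ => hfac i, Finset.prod_const]
      simp only [Finset.card_univ, Fintype.card_fin]
      field_simp
    · rw [if_neg hS]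
      push_neg at hS
      obtain ⟨i₀, hi₀S, hi₀⟩ := hS
      have hz : (∑ t : F, if i₀ ∈ S then ψ (y i₀ * t) else 1) = 0 := by
        simp only [hi₀S, if_true]
        rw [Finset.sum_congr rfl fun t (_ : t ∈ Finset.univ) => by rw [mul_comm]]
        exact h.sum_mul_right hi₀
      rw [Finset.prod_eq_zero (Finset.mem_univ i₀) hz, mul_zero]
  rw [key, Finset.sum_congr rfl (fun S hS => by rw [inner S hS])]
  rw [← Finset.mul_sum, Finset.sum_boole]
  have hfil : (Finset.powersetCard s (Finset.univ : Finset (Fin n))).filter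
        (fun S => ∀ i ∈ S, y i = 0)
      = Finset.powersetCard s (Finset.univ.filter fun i => y i = 0) := by
    ext S
    simp only [Finset.mem_filter, Finset.mem_powersetCard, Finset.subset_iff,
      Finset.mem_univ, true_and, and_true]
    tauto
  rw [hfil, Finset.card_powersetCard, one_div, inv_mul_eq_div]

end Specific

section Weight

variable {F : Type*} [Field F] {n k : ℕ}

lemma dual_weight [DecidableEq F] (a : Fin n → F) (ha : Function.Injective a)
    {y : Fin n → F} (hy : y ≠ 0)
    (hb : ∀ j : Fin k, ∑ i, y i * a i ^ (j : ℕ) = 0) :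
    k + 1 ≤ (Finset.univ.filter fun i => y i ≠ 0).card := by
  classical
  by_contra hcon
  push_neg at hcon
  set T := (Finset.univ.filter fun i => y i ≠ 0) with hT
  obtain ⟨i₀, hi₀⟩ : ∃ i, y i ≠ 0 := Function.ne_iff.mp hy
  have hi₀T : i₀ ∈ T := by simp [hT, hi₀]
  have hT1 : 1 ≤ T.card := Finset.card_pos.mpr ⟨i₀, hi₀T⟩
  have htk : T.card ≤ k := by omega
  set f := Lagrange.interpolate T a (fun i => if i = i₀ then (1:F) else 0) with hf
  have hinj : Set.InjOn a T := ha.injOn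
  have hdeg : f.degree < T.card := Lagrange.degree_interpolate_lt _ hinj
  have hnd : f.natDegree < k := by
    rcases eq_or_ne f 0 with h0 | h0
    · rw [h0, Polynomial.natDegree_zero]; omega
    · have := (Polynomial.natDegree_lt_iff_degree_lt h0).mpr
        (lt_of_lt_of_le hdeg (by exact_mod_cast htk))
      exact this
  have hev : ∀ i ∈ T, f.eval (a i) = if i = i₀ then 1 else 0 := fun i hi =>
    Lagrange.eval_interpolate_at_node _ hinj hi
  have hA1 : ∑ i, y i * f.eval (a i) = y i₀ := by
    rw [← Finset.sum_subset (Finset.subset_univ T) (fun i _ hiT => by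
      have : ¬ y i ≠ 0 := fun hne => hiT (by simp [hT, hne])
      push_neg at this
      rw [this, zero_mul])]
    rw [Finset.sum_congr rfl (fun i hi => by rw [hev i hi])]
    simp_rw [mul_ite, mul_one, mul_zero]
    rw [Finset.sum_ite_eq' T i₀, if_pos hi₀T]
  have hA0 : ∑ i, y i * f.eval (a i) = 0 := by
    have hev2 : ∀ i, f.eval (a i) = ∑ j ∈ Finset.range k, f.coeff j * a i ^ j :=
      fun i => Polynomial.eval_eq_sum_range' hnd _
    simp_rw [hev2, Finset.mul_sum]
    rw [Finset.sum_comm]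
    refine Finset.sum_eq_zero fun j hj => ?_
    have hjk : j < k := Finset.mem_range.mp hj
    have hbj := hb ⟨j, hjk⟩
    calc ∑ i, y i * (f.coeff j * a i ^ j)
        = f.coeff j * ∑ i, y i * a i ^ j := by
          rw [Finset.mul_sum]; exact Finset.sum_congr rfl fun i _ => by ring
      _ = 0 := by rw [hbj, mul_zero]
  exact hi₀ (by rw [← hA1, hA0])

end Weight

section Combinatorics

lemma nat_key {n k : ℕ} (hkn : k ≤ n) :
    ∀ s : ℕ, (n - k).choose s * n ^ s ≤ n.choose s * (n - k) ^ s := by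
  intro s
  induction s with
  | zero => simp
  | succ s ih =>
    set m := n - k with hm
    by_cases hsm : m ≤ s
    · rw [Nat.choose_eq_zero_of_lt (by omega)]; simp
    · push_neg at hsm
      have hmn : m ≤ n := Nat.sub_le n k
      refine Nat.le_of_mul_le_mul_left ?_ (Nat.succ_pos s)
      have e1 : m.choose (s+1) * (s+1) = m.choose s * (m - s) := Nat.choose_succ_right_eq m s
      have e2 : n.choose (s+1) * (s+1) = n.choose s * (n - s) := Nat.choose_succ_right_eq n s
      have hsub : (m - s) * n ≤ (n - s) * m := by
        have h1 : s * m ≤ s * n := Nat.mul_le_mul_left s hmn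
        have e3 : (m - s) * n = m * n - s * n := Nat.sub_mul m s n
        have e4 : (n - s) * m = n * m - s * m := Nat.sub_mul n s m
        rw [e3, e4, mul_comm n m]
        exact Nat.sub_le_sub_left h1 _
      calc (s+1) * (m.choose (s+1) * n ^ (s+1))
          = (m.choose (s+1) * (s+1)) * n ^ (s+1) := by ring
        _ = (m.choose s * n ^ s) * ((m - s) * n) := by rw [e1, pow_succ]; ring
        _ ≤ (n.choose s * m ^ s) * ((n - s) * m) := Nat.mul_le_mul ih hsub
        _ = (n.choose (s+1) * (s+1)) * m ^ (s+1) := by rw [e2, pow_succ]; ring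
        _ = (s+1) * (n.choose (s+1) * m ^ (s+1)) := by ring

lemma ratio_le {n k s t : ℕ} (hkn : k ≤ n) (hn0 : 0 < n) (hs : s ≤ n) (hkt : k + 1 ≤ t) :
    ((n - t).choose s : ℝ) / (n.choose s : ℝ) ≤ (1 - (k:ℝ)/n) ^ s := by
  have hC : 0 < ((n.choose s : ℕ) : ℝ) := by exact_mod_cast Nat.choose_pos hs
  have hnR : (0:ℝ) < (n:ℝ) := by exact_mod_cast hn0
  have hb : (1 : ℝ) - (k:ℝ)/(n:ℝ) = ((n - k : ℕ) : ℝ) / (n:ℝ) := by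
    rw [Nat.cast_sub hkn]; field_simp
  rw [hb, div_pow, div_le_div_iff₀ hC (by positivity)]
  have h1 : (n - t).choose s ≤ (n - k).choose s :=
    Nat.choose_le_choose s (Nat.sub_le_sub_left (by omega) n)
  have h2 := nat_key hkn s
  calc ((n - t).choose s : ℝ) * (n:ℝ)^s ≤ ((n - k).choose s : ℝ) * (n:ℝ)^s := by
        have : ((n - t).choose s : ℝ) ≤ ((n - k).choose s : ℝ) := by exact_mod_cast h1
        exact mul_le_mul_of_nonneg_right this (by positivity)
    _ ≤ ((n.choose s : ℕ) : ℝ) * ((n - k : ℕ) : ℝ)^s := by exact_mod_cast h2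
    _ = ((n - k : ℕ) : ℝ)^s * ((n.choose s : ℕ) : ℝ) := by ring

end Combinatorics

end MNC


lemma zmod2_cases : ∀ b : ZMod 2, b = 0 ∨ b = 1 := by decide
lemma zmod2_add11 : ((1:ZMod 2) + 1) = 0 := by decide
lemma zmod2_add01 : ((0:ZMod 2) + 1) = 1 := by decide
lemma zmod2_add10 : ((1:ZMod 2) + 0) = 1 := by decide
lemma zmod2_ne : (1:ZMod 2) ≠ 0 := by decide


/-- **Masked noisy codewords are close to uniform.**  For a uniform RS codeword `c`, the
random-subset noise `ρ` on `s` coordinates, and any independent distribution `D` with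
`H_∞(D) ≥ k'`, the sum `c + ρ + D` is `2^((nℓ-k')/2-1)·(1-R)^s`-close to uniform on
`𝔽_{2^ℓ}ⁿ`, where `R = k/n`. -/
theorem masked_noisy_codeword_close_to_uniform
    (ℓ n k : ℕ) (hkn : k ≤ n) (hn : n ≤ 2 ^ ℓ) (s : ℕ) (hs : s ≤ n) (k' : ℝ) (hk' : 0 ≤ k')
    (F : Type*) [Field F] [Fintype F] [DecidableEq F] (hF : Fintype.card F = 2 ^ ℓ)
    (a : Fin n → F) (ha : Function.Injective a)
    (D : (Fin n → F) → ℝ) (hD0 : ∀ w, 0 ≤ D w) (hD1 : ∑ w, D w = 1)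
    (hDent : k' ≤ minEntropy D) :
    SD (fun w => ∑ c0 : Fin n → F, ∑ r0 : Fin n → F,
          encDist k n a c0 * noiseDist n s r0 * D (w - c0 - r0))
        (fun _ : Fin n → F => 1 / 2 ^ (n * ℓ)) ≤
      (2 : ℝ) ^ (((n * ℓ : ℝ) - k') / 2 - 1) * (1 - (k : ℝ) / n) ^ s := by
  classical
  -- ## characteristic 2 and a nontrivial character
  have hp : (ringChar F).Prime := CharP.char_is_prime F (ringChar F)
  have hch2 : ringChar F = 2 := by
    have h0 : ((Fintype.card F : ℕ) : F) = 0 := FiniteField.cast_card_eq_zero F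
    have hdvd : ringChar F ∣ Fintype.card F :=
      (CharP.cast_eq_zero_iff F (ringChar F) _).mp h0
    rw [hF] at hdvd
    exact (Nat.prime_dvd_prime_iff_eq hp Nat.prime_two).mp (hp.dvd_of_dvd_pow hdvd)
  haveI hc2 : CharP F 2 := hch2 ▸ ringChar.charP F
  haveI : Fact (Nat.Prime 2) := ⟨Nat.prime_two⟩
  letI : Algebra (ZMod 2) F := ZMod.algebra F 2
  obtain ⟨φ, hφ1⟩ : ∃ φ : F →ₗ[ZMod 2] ZMod 2, φ 1 ≠ 0 := by
    by_contra hcon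
    push_neg at hcon
    exact one_ne_zero
      ((Module.forall_dual_apply_eq_zero_iff (ZMod 2) (1:F)).mp fun φ => hcon φ)
  set ψ : F → ℝ := fun x => if φ x = 0 then 1 else -1 with hψ
  have hz2 := zmod2_cases
  have hd1 := zmod2_add11
  have hd2 := zmod2_add01
  have hd3 := zmod2_add10
  have hd4 := zmod2_ne
  have h : MNC.GoodChar ψ := by
    refine ⟨?_, ?_, ?_⟩
    · intro x y
      have hxy : φ (x + y) = φ x + φ y := map_add φ x y
      rcases hz2 (φ x) with h1 | h1 <;> rcases hz2 (φ y) with h2 | h2 <;>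
        simp [hψ, hxy, h1, h2, hd1, hd2, hd3, hd4]
    · intro x; by_cases h1 : φ x = 0 <;> simp [hψ, h1]
    · exact ⟨1, by simp [hψ, hφ1]⟩
  have hchF : ∀ x : F, x + x = 0 := fun x => by
    have h2 : (2 : F) = 0 := by exact_mod_cast CharP.cast_eq_zero F 2
    rw [← two_mul, h2, zero_mul]
  have hch : ∀ v : Fin n → F, v + v = 0 := fun v => funext fun i => hchF (v i)
  -- ## notation
  set P : (Fin n → F) → ℝ := fun w => ∑ c0 : Fin n → F, ∑ r0 : Fin n → F,
    encDist k n a c0 * noiseDist n s r0 * D (w - c0 - r0) with hPdef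
  set Q : ℝ := ((Fintype.card F : ℝ)) ^ n with hQdef
  set u : ℝ := 1 / 2 ^ (n * ℓ) with hudef
  have hQ : Q = (2:ℝ) ^ (n * ℓ) := by
    rw [hQdef, hF]
    push_cast
    rw [← pow_mul, mul_comm]
  have hQpos : 0 < Q := by rw [hQ]; positivity
  have huQ : u * Q = 1 := by
    rw [hudef, hQ]
    field_simp
  -- ## Fourier transform of P
  set N : (Fin n → F) → ℝ := fun w' => ∑ r0, noiseDist n s r0 * D (w' - r0) with hN
  have hPeq : P = fun w => ∑ v, encDist k n a v * N (w - v) := by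
    funext w
    simp only [hPdef, hN]
    exact Finset.sum_congr rfl fun c0 _ => by simp only [Finset.mul_sum, mul_assoc]
  have hftP : ∀ y, MNC.ft ψ P y = MNC.ft ψ (encDist k n a) y *
      (MNC.ft ψ (noiseDist n s) y * MNC.ft ψ D y) := by
    intro y
    rw [hPeq, MNC.ft_conv h, hN, MNC.ft_conv h]
  have hft0 : MNC.ft ψ P 0 = 1 := by
    rw [hftP 0, MNC.ft_enc h, MNC.ft_noise h]
    rw [if_pos (fun j => by simp)]
    have hfil : (Finset.univ.filter fun i : Fin n => (0 : Fin n → F) i = 0) =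
        Finset.univ := by
      ext i; simp
    rw [hfil, Finset.card_univ, Fintype.card_fin]
    have hC : (0:ℝ) < (n.choose s : ℝ) := by exact_mod_cast Nat.choose_pos hs
    rw [div_self (ne_of_gt hC), MNC.ft_zero_eq_sum h, hD1]
    ring
  -- ## sum of squares via Parseval
  set g : (Fin n → F) → ℝ := fun w => P w - u with hgdef
  have hftg : ∀ y, MNC.ft ψ g y
      = MNC.ft ψ P y - u * (if y = 0 then Q else 0) := by
    intro y
    unfold MNC.ft
    rw [← MNC.sum_chr h y, Finset.mul_sum, ← Finset.sum_sub_distrib]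
    exact Finset.sum_congr rfl fun w _ => by rw [hgdef]; ring
  have hg0 : MNC.ft ψ g 0 = 0 := by
    rw [hftg 0, if_pos rfl, hft0]
    linarith [huQ]
  have hgP : ∀ y ∈ Finset.univ.erase (0 : Fin n → F),
      MNC.ft ψ g y = MNC.ft ψ P y := by
    intro y hy
    rw [hftg y, if_neg (Finset.ne_of_mem_erase hy), mul_zero, sub_zero]
  have hg2 : Q * ∑ w, (g w)^2 = ∑ y ∈ Finset.univ.erase (0 : Fin n → F),
      (MNC.ft ψ P y)^2 := by
    rw [← MNC.parseval h hch g]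
    rw [← Finset.add_sum_erase Finset.univ (fun y => (MNC.ft ψ g y)^2)
      (Finset.mem_univ (0 : Fin n → F))]
    rw [hg0]
    rw [Finset.sum_congr rfl fun y hy => by rw [hgP y hy]]
    ring
  -- ## pointwise bound for nonzero y
  have hβ0 : (0:ℝ) ≤ 1 - (k : ℝ) / n := by
    rcases Nat.eq_zero_or_pos n with h0 | h0
    · subst h0
      have : k = 0 := Nat.le_zero.mp hkn
      simp [this]
    · have hkn' : (k:ℝ) ≤ (n:ℝ) := by exact_mod_cast hkn
      have hnpos : (0:ℝ) < n := by exact_mod_cast h0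
      have : (k:ℝ)/n ≤ 1 := by rw [div_le_one hnpos]; exact hkn'
      linarith
  set β : ℝ := (1 - (k : ℝ) / n) ^ s with hβdef
  have hβnn : 0 ≤ β := pow_nonneg hβ0 s
  have hpt : ∀ y ∈ Finset.univ.erase (0 : Fin n → F),
      (MNC.ft ψ P y)^2 ≤ β^2 * (MNC.ft ψ D y)^2 := by
    intro y hy
    have hy0 : y ≠ 0 := Finset.ne_of_mem_erase hy
    have hEN : 0 ≤ MNC.ft ψ (encDist k n a) y * MNC.ft ψ (noiseDist n s) y ∧
        MNC.ft ψ (encDist k n a) y * MNC.ft ψ (noiseDist n s) y ≤ β := by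
      rw [MNC.ft_enc h, MNC.ft_noise h]
      by_cases hall : ∀ j : Fin k, ∑ i, y i * a i ^ (j : ℕ) = 0
      · rw [if_pos hall, one_mul]
        have hnn : (0:ℝ) ≤ (((Finset.univ.filter fun i => y i = 0).card.choose s : ℝ))
            / (n.choose s : ℝ) := by positivity
        refine ⟨hnn, ?_⟩
        obtain ⟨i₀, hi₀⟩ : ∃ i, y i ≠ 0 := Function.ne_iff.mp hy0
        have hn0 : 0 < n := i₀.pos
        have ht : k + 1 ≤ (Finset.univ.filter fun i => y i ≠ 0).card :=
          MNC.dual_weight a ha hy0 hall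
        have hsplit : (Finset.univ.filter fun i => y i = 0).card +
            (Finset.univ.filter fun i => ¬ (y i = 0)).card = n := by
          rw [Finset.card_filter_add_card_filter_not, Finset.card_univ,
            Fintype.card_fin]
        have hsame : (Finset.univ.filter fun i => y i ≠ 0)
            = (Finset.univ.filter fun i => ¬ (y i = 0)) := rfl
        rw [hsame] at ht
        have htle : (Finset.univ.filter fun i => ¬ (y i = 0)).card ≤ n := by omega
        have hz : (Finset.univ.filter fun i => y i = 0).card
            = n - (Finset.univ.filter fun i => ¬ (y i = 0)).card := by omega
        rw [hz, hβdef]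
        exact MNC.ratio_le hkn hn0 hs ht
      · rw [if_neg hall, zero_mul]
        exact ⟨le_refl 0, hβnn⟩
    calc (MNC.ft ψ P y)^2
        = (MNC.ft ψ (encDist k n a) y * MNC.ft ψ (noiseDist n s) y)^2
            * (MNC.ft ψ D y)^2 := by rw [hftP y]; ring
      _ ≤ β^2 * (MNC.ft ψ D y)^2 := by
          have := pow_le_pow_left₀ hEN.1 hEN.2 2
          exact mul_le_mul_of_nonneg_right this (sq_nonneg _)
  -- ## min-entropy bound
  have hMent : ∑ w, (D w)^2 ≤ (2:ℝ) ^ (-k') := by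
    set M : ℝ := ⨆ w, D w with hMdef
    obtain ⟨w₀, hw₀⟩ : ∃ w, D w ≠ 0 := by
      by_contra hcon
      push_neg at hcon
      rw [Finset.sum_congr rfl (fun w _ => hcon w)] at hD1
      simp at hD1
    have hw0pos : 0 < D w₀ := lt_of_le_of_ne (hD0 w₀) (Ne.symm hw₀)
    have hbdd : BddAbove (Set.range D) := Set.Finite.bddAbove (Set.finite_range D)
    have hMw : ∀ w, D w ≤ M := fun w => le_ciSup hbdd w
    have hMpos : 0 < M := lt_of_lt_of_le hw0pos (hMw w₀)
    have hlogb : Real.logb 2 M ≤ -k' := by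
      unfold minEntropy at hDent
      rw [← hMdef] at hDent
      linarith
    have hMle : M ≤ (2:ℝ)^(-k') :=
      (Real.logb_le_iff_le_rpow (by norm_num) hMpos).mp hlogb
    calc ∑ w, (D w)^2 ≤ ∑ w, M * D w := by
          refine Finset.sum_le_sum fun w _ => ?_
          have := hMw w
          have := hD0 w
          nlinarith
      _ = M * ∑ w, D w := by rw [Finset.mul_sum]
      _ = M := by rw [hD1, mul_one]
      _ ≤ (2:ℝ)^(-k') := hMle
  -- ## assembling
  have hsum : ∑ y ∈ Finset.univ.erase (0 : Fin n → F), (MNC.ft ψ P y)^2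
      ≤ β^2 * (Q * (2:ℝ)^(-k')) := by
    calc ∑ y ∈ Finset.univ.erase (0 : Fin n → F), (MNC.ft ψ P y)^2
        ≤ ∑ y ∈ Finset.univ.erase (0 : Fin n → F), β^2 * (MNC.ft ψ D y)^2 :=
          Finset.sum_le_sum hpt
      _ ≤ ∑ y, β^2 * (MNC.ft ψ D y)^2 :=
          Finset.sum_le_sum_of_subset_of_nonneg (Finset.erase_subset _ _)
            (fun y _ _ => by positivity)
      _ = β^2 * ∑ y, (MNC.ft ψ D y)^2 := by rw [Finset.mul_sum]
      _ = β^2 * (Q * ∑ w, (D w)^2) := by rw [MNC.parseval h hch D]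
      _ ≤ β^2 * (Q * (2:ℝ)^(-k')) := by
          have h1 : Q * ∑ w, (D w)^2 ≤ Q * (2:ℝ)^(-k') :=
            mul_le_mul_of_nonneg_left hMent (le_of_lt hQpos)
          exact mul_le_mul_of_nonneg_left h1 (sq_nonneg β)
  have hCS : (∑ w, |g w|)^2 ≤ Q * ∑ w, (g w)^2 := by
    have hcs := sq_sum_le_card_mul_sum_sq (s := (Finset.univ : Finset (Fin n → F)))
      (f := fun w => |g w|)
    have hcard : ((Finset.univ : Finset (Fin n → F)).card : ℝ) = Q := by
      rw [Finset.card_univ, Fintype.card_fun, Fintype.card_fin, hQdef]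
      push_cast
      ring
    rw [hcard] at hcs
    calc (∑ w, |g w|)^2 ≤ Q * ∑ w, |g w|^2 := hcs
      _ = Q * ∑ w, (g w)^2 := by
          congr 1
          exact Finset.sum_congr rfl fun w _ => sq_abs _
  set X : ℝ := (2 : ℝ) ^ (((n * ℓ : ℝ) - k') / 2 - 1) * β with hXdef
  have h2X : 2 * X = (2:ℝ) ^ (((n * ℓ : ℝ) - k') / 2) * β := by
    rw [hXdef, Real.rpow_sub (by norm_num : (0:ℝ) < 2), Real.rpow_one]
    ring
  have hXsq : ((2:ℝ) ^ (((n * ℓ : ℝ) - k') / 2))^2 = Q * (2:ℝ)^(-k') := by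
    have e1 : ((2:ℝ) ^ (((n * ℓ : ℝ) - k') / 2))^2 = (2:ℝ) ^ ((n * ℓ : ℝ) - k') := by
      rw [sq, ← Real.rpow_add (by norm_num : (0:ℝ) < 2), add_halves]
    rw [e1, sub_eq_add_neg, Real.rpow_add (by norm_num : (0:ℝ) < 2)]
    congr 1
    have e2 : ((n * ℓ : ℝ)) = (((n * ℓ : ℕ) : ℝ)) := by push_cast; ring
    rw [e2, Real.rpow_natCast, hQ]
  have hXnn : 0 ≤ 2 * X := by
    rw [h2X]
    exact mul_nonneg (le_of_lt (Real.rpow_pos_of_pos (by norm_num) _)) hβnn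
  have hfin : (∑ w, |g w|)^2 ≤ (2 * X)^2 := by
    calc (∑ w, |g w|)^2 ≤ Q * ∑ w, (g w)^2 := hCS
      _ = ∑ y ∈ Finset.univ.erase (0 : Fin n → F), (MNC.ft ψ P y)^2 := hg2
      _ ≤ β^2 * (Q * (2:ℝ)^(-k')) := hsum
      _ = (2 * X)^2 := by rw [h2X, mul_pow, hXsq]; ring
  have habs : (∑ w, |g w|) ≤ 2 * X := by
    have h1 : 0 ≤ ∑ w, |g w| := Finset.sum_nonneg fun w _ => abs_nonneg _
    calc (∑ w, |g w|) = Real.sqrt ((∑ w, |g w|)^2) := (Real.sqrt_sq h1).symm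
      _ ≤ Real.sqrt ((2*X)^2) := Real.sqrt_le_sqrt hfin
      _ = 2 * X := Real.sqrt_sq hXnn
  unfold SD
  have hsd : ∑ ω : Fin n → F, |P ω - u| = ∑ w, |g w| := by
    exact Finset.sum_congr rfl fun w _ => by rw [hgdef]
  linarith [habs, hsd]
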